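/- Let X and Y be d × d complex matrices with Y normal, and let p ≥ 1. Then ‖X*Y − Y*X‖₂ ≤ 2 * ‖X‖₂ * r(Y) ≤ ‖X‖₂ * (σ₁(Y) + σ₂(Y)) ≤ 2^(1 − 1/p) * ‖X‖₂ * ‖Y‖_p, where r(Y) is the radius of the spectrum of Y. -/

import Mathlib

open Matrix BigOperators Polynomial

/-- Frobenius norm of a complex matrix. -/
noncomputable def frobNorm {n : ℕ} (X : Matrix (Fin n) (Fin n) ℂ) : ℝ :=
  Real.sqrt (∑ i, ∑ j, ‖X i j‖ ^ 2)

/-- The entries of `v` sorted in non-increasing order: `sortedDesc v 0` is the largest, etc. -/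
noncomputable def sortedDesc {d : ℕ} (v : Fin d → ℝ) : Fin d → ℝ :=
  fun k => v (Tuple.sort v k.rev)

/-- The singular values of `X` in non-increasing order:
`singularValues X 0 = σ₁(X)`, `singularValues X 1 = σ₂(X)`, ... -/
noncomputable def singularValues {d : ℕ} (X : Matrix (Fin d) (Fin d) ℂ) : Fin d → ℝ :=
  sortedDesc fun i => Real.sqrt ((Matrix.isHermitian_conjTranspose_mul_self X).eigenvalues i)

/-- The Schatten `p`-norm of `X`. -/
noncomputable def schattenNorm {d : ℕ} (p : ℝ) (X : Matrix (Fin d) (Fin d) ℂ) : ℝ :=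
  (∑ i, singularValues X i ^ p) ^ (1 / p)

section AuxLemmas


noncomputable def fSq {d : ℕ} (M : Matrix (Fin d) (Fin d) ℂ) : ℝ :=
  ∑ i, ∑ j, ‖M i j‖ ^ 2

lemma fSq_eq_trace {d : ℕ} (M : Matrix (Fin d) (Fin d) ℂ) :
    fSq M = (Matrix.trace (Mᴴ * M)).re := by
  unfold fSq
  rw [Matrix.trace, Complex.re_sum]
  rw [Finset.sum_comm (f := fun i j => ‖M i j‖ ^ 2)]
  apply Finset.sum_congr rfl
  intro j _
  rw [Matrix.diag_apply, Matrix.mul_apply, Complex.re_sum]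
  apply Finset.sum_congr rfl
  intro i _
  rw [Matrix.conjTranspose_apply, Complex.sq_norm]
  rw [show star (M i j) * M i j = ((Complex.normSq (M i j) : ℂ)) from by
    rw [Complex.star_def, ← Complex.normSq_eq_conj_mul_self]]
  rw [Complex.ofReal_re]

lemma fSq_conj {d : ℕ} (U M : Matrix (Fin d) (Fin d) ℂ) (hU : star U * U = 1) :
    fSq (U * M * star U) = fSq M := by
  have hU2 : U * star U = 1 := mul_eq_one_comm.mp hU
  have hUc : Uᴴ * U = 1 := by rw [← Matrix.star_eq_conjTranspose]; exact hU
  rw [fSq_eq_trace, fSq_eq_trace]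
  congr 1
  simp only [Matrix.star_eq_conjTranspose]
  have key : (U * M * Uᴴ)ᴴ * (U * M * Uᴴ) = U * (Mᴴ * M) * Uᴴ := by
    rw [Matrix.conjTranspose_mul, Matrix.conjTranspose_mul, Matrix.conjTranspose_conjTranspose]
    simp only [Matrix.mul_assoc]
    rw [← Matrix.mul_assoc Uᴴ U (M * Uᴴ), hUc, Matrix.one_mul]
  rw [key, Matrix.trace_mul_comm, ← Matrix.mul_assoc, hUc, Matrix.one_mul]


lemma fSq_comm_diag {d : ℕ} (Z : Matrix (Fin d) (Fin d) ℂ) (μ : Fin d → ℂ) (R : ℝ)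
    (hR : 0 ≤ R) (hRb : ∀ i j, ‖μ j - μ i‖ ≤ R) :
    fSq (Z * Matrix.diagonal μ - Matrix.diagonal μ * Z) ≤ R ^ 2 * fSq Z := by
  unfold fSq
  rw [Finset.mul_sum]
  apply Finset.sum_le_sum
  intro i _
  rw [Finset.mul_sum]
  apply Finset.sum_le_sum
  intro j _
  have he : (Z * Matrix.diagonal μ - Matrix.diagonal μ * Z) i j = Z i j * (μ j - μ i) := by
    simp only [Matrix.sub_apply, Matrix.mul_diagonal, Matrix.diagonal_mul]
    ring
  rw [he, norm_mul, mul_pow]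
  rw [mul_comm (R^2) _]
  apply mul_le_mul_of_nonneg_left _ (by positivity)
  apply pow_le_pow_left₀ (norm_nonneg _) (hRb i j)


lemma charpoly_conj' {d : ℕ} (U M : Matrix (Fin d) (Fin d) ℂ) (hU : star U * U = 1) :
    (U * M * star U).charpoly = M.charpoly := by
  have hU2 : U * star U = 1 := mul_eq_one_comm.mp hU
  have key : charmatrix (U * M * star U) =
      (U.map C) * charmatrix M * ((star U).map C) := by
    rw [charmatrix, charmatrix, Matrix.mul_sub, Matrix.sub_mul]
    congr 1
    · rw [scalar_apply, ← Matrix.smul_one_eq_diagonal, Matrix.mul_smul, Matrix.mul_one,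
        Matrix.smul_mul, ← Matrix.map_mul, hU2, Matrix.map_one C (map_zero C) (map_one C)]
    · rw [RingHom.mapMatrix_apply, RingHom.mapMatrix_apply, ← Matrix.map_mul, ← Matrix.map_mul]
  rw [Matrix.charpoly, key, Matrix.det_mul, Matrix.det_mul, mul_comm, ← mul_assoc, ← Matrix.det_mul,
    ← Matrix.map_mul, hU, Matrix.map_one C (map_zero C) (map_one C), Matrix.det_one, one_mul]
  rfl

lemma charpoly_diag' {d : ℕ} (μ : Fin d → ℂ) :
    (Matrix.diagonal μ).charpoly = ∏ i, (X - C (μ i)) := by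
  rw [Matrix.charpoly, ← Matrix.det_diagonal]
  congr 1
  ext i j
  by_cases h : i = j
  · subst h; simp [charmatrix_apply_eq]
  · simp [charmatrix_apply_ne _ _ _ h, Matrix.diagonal_apply_ne _ h]

lemma multiset_of_prod_eq {d : ℕ} (v w : Fin d → ℂ)
    (h : (∏ i, (X - C (v i))) = ∏ i, (X - C (w i))) :
    Multiset.map v Finset.univ.val = Multiset.map w Finset.univ.val := by
  have hv := roots_multiset_prod_X_sub_C (Multiset.map v Finset.univ.val)
  have hw := roots_multiset_prod_X_sub_C (Multiset.map w Finset.univ.val)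
  rw [← hv, ← hw]
  congr 1
  rw [Multiset.map_map, Multiset.map_map]
  exact h

lemma sv_multiset {d : ℕ} (Y U : Matrix (Fin d) (Fin d) ℂ) (μ : Fin d → ℂ)
    (hU : star U * U = 1) (hY2 : Y = U * Matrix.diagonal μ * star U) :
    Multiset.map (fun i => Real.sqrt ((Matrix.isHermitian_conjTranspose_mul_self Y).eigenvalues i))
        Finset.univ.val
      = Multiset.map (fun i => ‖μ i‖) Finset.univ.val := by
  have hU2 : U * star U = 1 := mul_eq_one_comm.mp hU
  set hherm := Matrix.isHermitian_conjTranspose_mul_self Y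
  set ev := hherm.eigenvalues with hevdef
  set V : Matrix (Fin d) (Fin d) ℂ := (Matrix.IsHermitian.eigenvectorUnitary hherm : Matrix (Fin d) (Fin d) ℂ) with hVdef
  have hV : star V * V = 1 := by
    have := (Matrix.IsHermitian.eigenvectorUnitary hherm).2
    rw [Matrix.mem_unitaryGroup_iff] at this
    exact mul_eq_one_comm.mp this
  have hVspec : Yᴴ * Y = V * Matrix.diagonal (RCLike.ofReal ∘ ev) * star V :=
    hherm.spectral_theorem
  -- conjugate form of Yᴴ Y
  have hconj : Yᴴ * Y = U * Matrix.diagonal (fun i => star (μ i) * μ i) * star U := by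
    rw [hY2]
    simp only [Matrix.conjTranspose_mul, Matrix.conjTranspose_conjTranspose,
      Matrix.star_eq_conjTranspose, Matrix.diagonal_conjTranspose]
    simp only [Matrix.mul_assoc]
    rw [← Matrix.mul_assoc Uᴴ U, show Uᴴ * U = 1 from hU, Matrix.one_mul,
      ← Matrix.mul_assoc (Matrix.diagonal (star μ)) (Matrix.diagonal μ) Uᴴ,
      Matrix.diagonal_mul_diagonal]
    rfl
  have hcp1 : (Yᴴ * Y).charpoly = ∏ i, (X - C ((RCLike.ofReal ∘ ev) i)) := by
    rw [hVspec, charpoly_conj' V _ hV, charpoly_diag']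
  have hcp2 : (Yᴴ * Y).charpoly = ∏ i, (X - C (star (μ i) * μ i)) := by
    rw [hconj, charpoly_conj' U _ hU, charpoly_diag']
  have hms : Multiset.map (fun i => ((ev i : ℝ) : ℂ)) Finset.univ.val
      = Multiset.map (fun i => star (μ i) * μ i) Finset.univ.val := by
    apply multiset_of_prod_eq
    rw [← hcp2, hcp1]
    rfl
  have := congrArg (Multiset.map (fun z : ℂ => Real.sqrt z.re)) hms
  rw [Multiset.map_map, Multiset.map_map] at this
  rw [show (fun i => Real.sqrt (ev i))
      = ((fun z : ℂ => Real.sqrt z.re) ∘ fun i => ((ev i : ℝ) : ℂ)) from by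
    funext i; simp]
  rw [this]
  apply Multiset.map_congr rfl
  intro i _
  simp only [Function.comp_apply]
  rw [show (star (μ i) * μ i : ℂ) = ((Complex.normSq (μ i) : ℝ) : ℂ) by
    rw [Complex.star_def, ← Complex.normSq_eq_conj_mul_self]]
  rw [Complex.ofReal_re, ← Complex.sq_norm, Real.sqrt_sq (norm_nonneg _)]

lemma sortedDesc_antitone {d : ℕ} (v : Fin d → ℝ) : Antitone (sortedDesc v) := by
  intro k k' hkk'
  exact Tuple.monotone_sort v (Fin.rev_le_rev.mpr hkk')

lemma sortedDesc_multiset {d : ℕ} (v : Fin d → ℝ) :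
    Multiset.map (sortedDesc v) Finset.univ.val = Multiset.map v Finset.univ.val := by
  have he : sortedDesc v = v ∘ (Fin.revPerm.trans (Tuple.sort v)) := rfl
  rw [he]
  have hmape : Multiset.map (⇑(Fin.revPerm.trans (Tuple.sort v))) Finset.univ.val
      = Finset.univ.val := by
    have h := congrArg Finset.val (Finset.map_univ_equiv (Fin.revPerm.trans (Tuple.sort v)))
    rw [Finset.map_val] at h
    simpa using h
  rw [← Multiset.map_map, hmape]

-- selection lemma
lemma top_two {d : ℕ} (hd : 2 ≤ d) (s : Fin d → ℝ) (w : Fin d → ℝ) (hanti : Antitone s)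
    (hms : Multiset.map s Finset.univ.val = Multiset.map w Finset.univ.val) :
    ∃ a, w a = s ⟨0, lt_of_lt_of_le two_pos hd⟩ ∧ ∀ k, k ≠ a → w k ≤ s ⟨1, lt_of_lt_of_le one_lt_two hd⟩ := by
  classical
  set z0 : Fin d := ⟨0, by omega⟩
  set z1 : Fin d := ⟨1, by omega⟩
  have h1 : Multiset.map s Finset.univ.val
      = s z0 ::ₘ Multiset.map s (Finset.univ.val.erase z0) := by
    rw [← Multiset.map_cons, Multiset.cons_erase (Finset.mem_univ z0)]
  have hmem : s z0 ∈ Multiset.map w Finset.univ.val := by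
    rw [← hms, h1]; exact Multiset.mem_cons_self _ _
  obtain ⟨a, _, ha⟩ := Multiset.mem_map.mp hmem
  refine ⟨a, ha, ?_⟩
  have h2 : Multiset.map w Finset.univ.val
      = s z0 ::ₘ Multiset.map w (Finset.univ.val.erase a) := by
    rw [← ha, ← Multiset.map_cons, Multiset.cons_erase (Finset.mem_univ a)]
  have hrest : Multiset.map s (Finset.univ.val.erase z0)
      = Multiset.map w (Finset.univ.val.erase a) := by
    have := hms
    rw [h1, h2] at this
    exact (Multiset.cons_inj_right _).mp this
  intro k hk
  have hkmem : w k ∈ Multiset.map w (Finset.univ.val.erase a) := by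
    apply Multiset.mem_map_of_mem
    exact (Multiset.mem_erase_of_ne hk).mpr (Finset.mem_univ k)
  rw [← hrest] at hkmem
  obtain ⟨j, hj, hjk⟩ := Multiset.mem_map.mp hkmem
  have hj0 : j ≠ z0 := by
    have := (Multiset.Nodup.mem_erase_iff Finset.univ.nodup).mp hj
    exact this.1
  have : z1 ≤ j := by
    have : (j : ℕ) ≠ 0 := fun h => hj0 (Fin.ext h)
    exact Fin.mk_le_of_le_val (by omega)
  rw [← hjk]
  exact hanti this


lemma geom {d : ℕ} (hd : 2 ≤ d) (lam : Fin d → ℂ) (σ1 σ2 : ℝ) (h2nn : 0 ≤ σ2) (h21 : σ2 ≤ σ1)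
    (a : Fin d) (ha : ‖lam a‖ = σ1) (hk : ∀ k, k ≠ a → ‖lam k‖ ≤ σ2) :
    2 * (⨅ y : ℂ, ⨆ i, ‖lam i - y‖) ≤ σ1 + σ2 := by
  haveI : NeZero d := ⟨by omega⟩
  set t : ℝ := (σ1 - σ2) / 2 with htdef
  have ht0 : 0 ≤ t := by rw [htdef]; linarith
  have ht1 : t ≤ σ1 := by rw [htdef]; linarith
  set y₀ : ℂ := (t : ℂ) * (lam a / (‖lam a‖ : ℂ)) with hydef
  have hbdd : ∀ y : ℂ, BddAbove (Set.range fun i => ‖lam i - y‖) :=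
    fun y => Set.Finite.bddAbove (Set.finite_range _)
  have hS0 : ∀ y : ℂ, (0:ℝ) ≤ ⨆ i, ‖lam i - y‖ :=
    fun y => le_trans (norm_nonneg (lam 0 - y)) (le_ciSup (hbdd y) 0)
  have hSy0 : (⨆ i, ‖lam i - y₀‖) ≤ (σ1 + σ2) / 2 := by
    apply ciSup_le
    intro k
    by_cases hka : k = a
    · subst hka
      by_cases h0 : lam k = 0
      · have hσ1 : σ1 = 0 := by rw [← ha, h0]; simp
        have hσ2 : σ2 = 0 := le_antisymm (hσ1 ▸ h21) h2nn
        rw [h0, hydef, h0]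
        simp [hσ1, hσ2]
      · have habs : ‖lam k‖ ≠ 0 := by simpa using h0
        have hkey : lam k - y₀ = ((1 : ℂ) - (t / σ1 : ℝ)) * lam k := by
          rw [hydef, ha]
          have hσ1ne : (σ1 : ℂ) ≠ 0 := by
            simp only [ne_eq, Complex.ofReal_eq_zero]
            rw [← ha]; exact habs
          push_cast
          field_simp
        rw [hkey, norm_mul, ha]
        have : ‖(1 : ℂ) - (t / σ1 : ℝ)‖ = 1 - t / σ1 := by
          rw [show (1 : ℂ) - (t / σ1 : ℝ) = ((1 - t / σ1 : ℝ) : ℂ) by push_cast; ring]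
          rw [Complex.norm_real, Real.norm_eq_abs, abs_of_nonneg]
          have hσ1pos : 0 < σ1 := lt_of_le_of_ne (le_trans h2nn h21) (by
            intro h; exact habs (by rw [ha, ← h]))
          have : t / σ1 ≤ 1 := by
            rw [div_le_one hσ1pos]; exact ht1
          linarith
        rw [this]
        have hσ1pos : 0 < σ1 := lt_of_le_of_ne (le_trans h2nn h21) (by
          intro h; exact habs (by rw [ha, ← h]))
        have : (1 - t / σ1) * σ1 = σ1 - t := by field_simp
        rw [this, htdef]
        linarith
    · have h1 : ‖lam k - y₀‖ ≤ ‖lam k‖ + ‖y₀‖ := by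
        calc ‖lam k - y₀‖ ≤ ‖lam k‖ + ‖-y₀‖ := by
              rw [sub_eq_add_neg]; exact norm_add_le _ _
        _ = ‖lam k‖ + ‖y₀‖ := by rw [norm_neg]
      have hy0 : ‖y₀‖ ≤ t := by
        rw [hydef, norm_mul, Complex.norm_real, Real.norm_eq_abs, abs_of_nonneg ht0]
        have : ‖lam a / (‖lam a‖ : ℂ)‖ ≤ 1 := by
          by_cases h0 : lam a = 0
          · simp [h0]
          · rw [norm_div, Complex.norm_real, Real.norm_eq_abs, abs_of_nonneg (norm_nonneg _)]
            rw [div_self (by simpa using h0)]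
        calc t * ‖lam a / (‖lam a‖ : ℂ)‖ ≤ t * 1 :=
              mul_le_mul_of_nonneg_left this ht0
        _ = t := mul_one t
      have := hk k hka
      rw [htdef] at hy0
      linarith
  have hinf : (⨅ y : ℂ, ⨆ i, ‖lam i - y‖) ≤ (σ1 + σ2)/2 := by
    apply le_trans (ciInf_le ⟨0, fun x hx => ?_⟩ y₀) hSy0
    obtain ⟨y, hy⟩ := hx
    rw [← hy]
    exact hS0 y
  linarith


lemma pm {d : ℕ} (hd : 2 ≤ d) (s : Fin d → ℝ) (hs : ∀ i, 0 ≤ s i) (p : ℝ) (hp : 1 ≤ p) :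
    s ⟨0, lt_of_lt_of_le two_pos hd⟩ + s ⟨1, lt_of_lt_of_le one_lt_two hd⟩ ≤ (2:ℝ) ^ (1 - 1/p) * (∑ i, s i ^ p) ^ (1/p) := by
  have hp0 : 0 < p := lt_of_lt_of_le one_pos hp
  set z0 : Fin d := ⟨0, by omega⟩
  set z1 : Fin d := ⟨1, by omega⟩
  set a := s z0 with hadef
  set b := s z1 with hbdef
  have ha : 0 ≤ a := hs z0
  have hb : 0 ≤ b := hs z1
  have h1 : ((1/2) * a + (1/2) * b) ^ p ≤ (1/2) * a ^ p + (1/2) * b ^ p := by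
    have := Real.rpow_arith_mean_le_arith_mean_rpow (Finset.univ : Finset (Fin 2))
      ![1/2, 1/2] ![a, b] (by intro i _; fin_cases i <;> norm_num)
      (by simp [Fin.sum_univ_two]; norm_num)
      (by intro i _; fin_cases i <;> assumption) hp
    simpa [Fin.sum_univ_two] using this
  have step1 : (1/2) * (a + b) ≤ ((1/2) * a ^ p + (1/2) * b ^ p) ^ (1/p) := by
    have hmono := Real.rpow_le_rpow (by positivity) h1 (by positivity : (0:ℝ) ≤ 1/p)
    have hl : (((1/2) * a + (1/2) * b) ^ p) ^ (1/p) = (1/2) * a + (1/2) * b := by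
      rw [← Real.rpow_mul (by positivity), mul_one_div_cancel hp0.ne', Real.rpow_one]
    rw [hl] at hmono
    calc (1/2) * (a + b) = (1/2) * a + (1/2) * b := by ring
    _ ≤ _ := hmono
  have h2 : a ^ p + b ^ p ≤ ∑ i, s i ^ p := by
    have hsub : ({z0, z1} : Finset (Fin d)) ⊆ Finset.univ := Finset.subset_univ _
    have hne : z0 ≠ z1 := by
      intro h
      have := congrArg Fin.val h
      simp [z0, z1] at this
    have hpair : ∑ i ∈ ({z0, z1} : Finset (Fin d)), s i ^ p = a ^ p + b ^ p :=
      Finset.sum_pair hne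
    rw [← hpair]
    apply Finset.sum_le_sum_of_subset_of_nonneg hsub
    intro i _ _
    exact Real.rpow_nonneg (hs i) p
  have step2 : ((1/2) * a ^ p + (1/2) * b ^ p) ^ (1/p) ≤ ((1/2) * ∑ i, s i ^ p) ^ (1/p) := by
    apply Real.rpow_le_rpow (by positivity) _ (by positivity)
    linarith
  have key : (1/2) * (a + b) ≤ ((1/2) * ∑ i, s i ^ p) ^ (1/p) := le_trans step1 step2
  have hsum0 : 0 ≤ ∑ i, s i ^ p := Finset.sum_nonneg fun i _ => Real.rpow_nonneg (hs i) p
  have hhalf : ((1/2 : ℝ) * ∑ i, s i ^ p) ^ (1/p)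
      = (2:ℝ) ^ (-(1/p)) * (∑ i, s i ^ p) ^ (1/p) := by
    rw [Real.mul_rpow (by norm_num) hsum0]
    congr 1
    rw [show (1/2 : ℝ) = 2⁻¹ by norm_num, ← Real.rpow_neg_one,
      ← Real.rpow_mul (by norm_num : (0:ℝ) ≤ 2)]
    congr 1
    ring
  rw [hhalf] at key
  have : a + b ≤ 2 * ((2:ℝ) ^ (-(1/p)) * (∑ i, s i ^ p) ^ (1/p)) := by linarith
  calc a + b ≤ 2 * ((2:ℝ) ^ (-(1/p)) * (∑ i, s i ^ p) ^ (1/p)) := this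
  _ = (2:ℝ) ^ (1 - 1/p) * (∑ i, s i ^ p) ^ (1/p) := by
      rw [Real.rpow_sub (by norm_num : (0:ℝ) < 2), Real.rpow_one, Real.rpow_neg (by norm_num),
        div_eq_mul_inv]
      ring

lemma frobNorm_eq_sqrt_fSq {n : ℕ} (X : Matrix (Fin n) (Fin n) ℂ) :
    frobNorm X = Real.sqrt (fSq X) := rfl

lemma normal_diag (d : ℕ) (Y : Matrix (Fin d) (Fin d) ℂ) (hY : Yᴴ * Y = Y * Yᴴ) :
    ∃ (U : Matrix (Fin d) (Fin d) ℂ) (μ : Fin d → ℂ),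
      star U * U = 1 ∧ Y = U * Matrix.diagonal μ * star U := by
  classical
  set Am := Y + Yᴴ with hAmdef
  set Bm := Complex.I • (Yᴴ - Y) with hBmdef
  have hAm : Am.IsHermitian := by
    simp [Matrix.IsHermitian, hAmdef, Matrix.conjTranspose_add, add_comm]
  have hBm : Bm.IsHermitian := by
    simp only [Matrix.IsHermitian, hBmdef, Matrix.conjTranspose_smul, Matrix.conjTranspose_sub,
      Matrix.conjTranspose_conjTranspose, Complex.star_def, Complex.conj_I, neg_smul, smul_sub]
    module
  have hcomm : Am * Bm = Bm * Am := by
    simp only [hAmdef, hBmdef, Matrix.mul_smul, Matrix.smul_mul, mul_sub, sub_mul, add_mul, mul_add]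
    rw [hY]
  -- operators
  set A := Matrix.toEuclideanLin Am with hAdef
  set B := Matrix.toEuclideanLin Bm with hBdef
  have hmul : ∀ M N : Matrix (Fin d) (Fin d) ℂ,
      Matrix.toEuclideanLin (M * N) = (Matrix.toEuclideanLin M) ∘ₗ (Matrix.toEuclideanLin N) := by
    intro M N
    ext v
    simp [Matrix.toEuclideanLin_apply, Matrix.mulVec_mulVec]
  have hA : A.IsSymmetric := Matrix.isHermitian_iff_isSymmetric.mp hAm
  have hB : B.IsSymmetric := Matrix.isHermitian_iff_isSymmetric.mp hBm
  have hAB : Commute A B := by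
    unfold Commute SemiconjBy
    rw [hAdef, hBdef, Module.End.mul_eq_comp, Module.End.mul_eq_comp, ← hmul, ← hmul, hcomm]
  -- internal direct sum over joint eigenspaces
  set V : ℂ × ℂ → Submodule ℂ (EuclideanSpace ℂ (Fin d)) :=
    fun i => Module.End.eigenspace A i.2 ⊓ Module.End.eigenspace B i.1 with hVdef
  have hInt : DirectSum.IsInternal V :=
    LinearMap.IsSymmetric.directSum_isInternal_of_commute hA hB hAB
  have hOrth := LinearMap.IsSymmetric.orthogonalFamily_eigenspace_inf_eigenspace hA hB
  obtain ⟨hindep, hsup⟩ := (DirectSum.isInternal_submodule_iff_iSupIndep_and_iSup_eq_top V).mp hInt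
  haveI : Fintype {i // V i ≠ ⊥} := hindep.fintypeNeBotOfFiniteDimensional
  set V' : {i // V i ≠ ⊥} → Submodule ℂ (EuclideanSpace ℂ (Fin d)) := fun p => V p.1 with hV'def
  have hindep' : iSupIndep V' := hindep.comp Subtype.val_injective
  have hsup' : ⨆ p, V' p = ⊤ := by
    rw [← top_le_iff, ← hsup]
    apply iSup_le
    intro i
    by_cases h : V i = ⊥
    · simp [h]
    · exact le_iSup V' ⟨i, h⟩
  have hInt' : DirectSum.IsInternal V' :=
    (DirectSum.isInternal_submodule_iff_iSupIndep_and_iSup_eq_top V').mpr ⟨hindep', hsup'⟩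
  have hOrth' := hOrth.comp (Subtype.val_injective (p := fun i => V i ≠ ⊥))
  have hn : Module.finrank ℂ (EuclideanSpace ℂ (Fin d)) = d := finrank_euclideanSpace_fin
  set b := hInt'.subordinateOrthonormalBasis hn hOrth' with hbdef
  set idx := fun j => hInt'.subordinateOrthonormalBasisIndex hn j hOrth' with hidxdef
  have hmem : ∀ j, b j ∈ V' (idx j) :=
    fun j => hInt'.subordinateOrthonormalBasis_subordinate hn j hOrth'
  -- eigen equations
  set μ : Fin d → ℂ := fun j => ((idx j).1.2 + Complex.I * (idx j).1.1) / 2 with hmudef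
  have heig : ∀ j, Y.mulVec (b j) = μ j • (b j : Fin d → ℂ) := by
    intro j
    obtain ⟨h1, h2⟩ := hmem j
    simp only [SetLike.mem_coe] at h1 h2
    rw [Module.End.mem_eigenspace_iff] at h1 h2
    have e1 : Am.mulVec (b j) = (idx j).1.2 • (b j : Fin d → ℂ) := congrArg (WithLp.equiv 2 _) h1
    have e2 : Bm.mulVec (b j) = (idx j).1.1 • (b j : Fin d → ℂ) := congrArg (WithLp.equiv 2 _) h2
    have hYdec : Y = (1/2 : ℂ) • (Am + Complex.I • Bm) := by
      rw [hAmdef, hBmdef, smul_smul, Complex.I_mul_I]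
      module
    rw [hYdec, Matrix.smul_mulVec, Matrix.add_mulVec, Matrix.smul_mulVec, e1, e2,
      hmudef]
    simp only [smul_smul]
    rw [← add_smul, smul_smul]
    congr 1
    ring
  -- build U
  set U : Matrix (Fin d) (Fin d) ℂ := Matrix.of (fun i j => (b j : EuclideanSpace ℂ (Fin d)) i)
    with hUdef
  have hOrthonormal := b.orthonormal
  rw [orthonormal_iff_ite] at hOrthonormal
  have hU : star U * U = 1 := by
    ext i j
    simp only [Matrix.mul_apply, Matrix.star_apply, hUdef, Matrix.of_apply, Matrix.one_apply]
    have := hOrthonormal i j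
    rw [PiLp.inner_apply] at this
    simpa [RCLike.inner_apply, mul_comm] using this
  have hYU : Y * U = U * Matrix.diagonal μ := by
    ext i j
    have := congrFun (heig j) i
    simp only [Matrix.mulVec, dotProduct] at this
    rw [Matrix.mul_diagonal]
    simp only [Matrix.mul_apply, hUdef, Matrix.of_apply]
    rw [this]
    simp [mul_comm]
  refine ⟨U, μ, hU, ?_⟩
  have hU2 : U * star U = 1 := mul_eq_one_comm.mp hU
  calc Y = Y * (U * star U) := by rw [hU2, mul_one]
  _ = (Y * U) * star U := by rw [mul_assoc]
  _ = U * Matrix.diagonal μ * star U := by rw [hYU]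

lemma part1 (d : ℕ) (hd : 2 ≤ d) (X U : Matrix (Fin d) (Fin d) ℂ) (μ lam : Fin d → ℂ)
    (hU : star U * U = 1)
    (hml : Multiset.map μ Finset.univ.val = Multiset.map lam Finset.univ.val) :
    frobNorm (X * (U * Matrix.diagonal μ * star U) - (U * Matrix.diagonal μ * star U) * X)
      ≤ 2 * frobNorm X * (⨅ y : ℂ, ⨆ i, ‖lam i - y‖) := by
  haveI : NeZero d := ⟨by omega⟩
  have hU2 : U * star U = 1 := mul_eq_one_comm.mp hU
  set S : ℂ → ℝ := fun y => ⨆ i, ‖lam i - y‖ with hSdef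
  have hbdd : ∀ y : ℂ, BddAbove (Set.range fun i => ‖lam i - y‖) :=
    fun y => Set.Finite.bddAbove (Set.finite_range _)
  have hS0 : ∀ y, 0 ≤ S y := by
    intro y
    exact le_trans (norm_nonneg (lam 0 - y)) (le_ciSup (hbdd y) 0)
  have hSb : ∀ y i, ‖μ i - y‖ ≤ S y := by
    intro y i
    have : μ i ∈ Multiset.map lam Finset.univ.val := by
      rw [← hml]
      exact Multiset.mem_map_of_mem _ (Finset.mem_univ i)
    obtain ⟨j, _, hj⟩ := Multiset.mem_map.mp this
    rw [← hj]
    exact le_ciSup (hbdd y) j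
  -- pointwise diagonal bound
  have hpt : ∀ y i j, ‖μ j - μ i‖ ≤ 2 * S y := by
    intro y i j
    calc ‖μ j - μ i‖ ≤ ‖μ j - y‖ + ‖y - μ i‖ :=
          norm_sub_le_norm_sub_add_norm_sub _ _ _
    _ = ‖μ j - y‖ + ‖μ i - y‖ := by
          rw [← norm_neg (y - μ i), neg_sub]
    _ ≤ S y + S y := add_le_add (hSb y j) (hSb y i)
    _ = 2 * S y := by ring
  set Z := star U * X * U with hZdef
  have hXZ : X = U * Z * star U := by
    rw [hZdef, ← Matrix.mul_assoc, ← Matrix.mul_assoc, hU2, Matrix.one_mul, Matrix.mul_assoc,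
      hU2, Matrix.mul_one]
  have hcommeq : X * (U * Matrix.diagonal μ * star U) - (U * Matrix.diagonal μ * star U) * X
      = U * (Z * Matrix.diagonal μ - Matrix.diagonal μ * Z) * star U := by
    rw [Matrix.mul_sub, Matrix.sub_mul]
    congr 1
    · conv_lhs => rw [hXZ]
      simp only [Matrix.mul_assoc]
      rw [← Matrix.mul_assoc (star U) U _, hU, Matrix.one_mul]
    · conv_lhs => rw [hXZ]
      simp only [Matrix.mul_assoc]
      rw [← Matrix.mul_assoc (star U) U _, hU, Matrix.one_mul]
  have hfX : frobNorm X = Real.sqrt (fSq Z) := by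
    rw [hXZ, frobNorm_eq_sqrt_fSq, fSq_conj U Z hU]
  have hbound : ∀ y : ℂ, frobNorm (X * (U * Matrix.diagonal μ * star U)
      - (U * Matrix.diagonal μ * star U) * X) ≤ 2 * frobNorm X * S y := by
    intro y
    rw [hcommeq, frobNorm_eq_sqrt_fSq, fSq_conj U _ hU]
    have h1 : fSq (Z * Matrix.diagonal μ - Matrix.diagonal μ * Z) ≤ (2 * S y) ^ 2 * fSq Z :=
      fSq_comm_diag Z μ (2 * S y) (by have := hS0 y; linarith) (hpt y)
    calc Real.sqrt (fSq (Z * Matrix.diagonal μ - Matrix.diagonal μ * Z))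
        ≤ Real.sqrt ((2 * S y) ^ 2 * fSq Z) := Real.sqrt_le_sqrt h1
    _ = (2 * S y) * Real.sqrt (fSq Z) := by
        rw [Real.sqrt_mul (by positivity), Real.sqrt_sq (by have := hS0 y; linarith)]
    _ = 2 * frobNorm X * S y := by rw [hfX]; ring
  have hrw : 2 * frobNorm X * (⨅ y : ℂ, S y) = ⨅ y : ℂ, 2 * frobNorm X * S y := by
    rw [Real.mul_iInf_of_nonneg]
    have : (0:ℝ) ≤ frobNorm X := Real.sqrt_nonneg _
    linarith
  rw [hrw]
  exact le_ciInf hbound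

end AuxLemmas

/-- For `Y` normal with eigenvalues `λ i` and any `X`, and `p ≥ 1`,
`‖XY - YX‖₂ ≤ 2‖X‖₂ r(Y) ≤ ‖X‖₂ (σ₁(Y) + σ₂(Y)) ≤ 2^(1-1/p) ‖X‖₂ ‖Y‖_p`,
where `r(Y)` is the radius of the spectrum of `Y`. -/
theorem commutator_bound_normal (d : ℕ) (hd : 2 ≤ d)
    (X Y : Matrix (Fin d) (Fin d) ℂ) (hY : Yᴴ * Y = Y * Yᴴ)
    (lam : Fin d → ℂ)
    (hlam : Y.charpoly = ∏ i, (Polynomial.X - Polynomial.C (lam i)))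
    (p : ℝ) (hp : 1 ≤ p) :
    frobNorm (X * Y - Y * X) ≤ 2 * frobNorm X * (⨅ y : ℂ, ⨆ i, ‖lam i - y‖)
    ∧ 2 * frobNorm X * (⨅ y : ℂ, ⨆ i, ‖lam i - y‖)
        ≤ frobNorm X * (singularValues Y ⟨0, by omega⟩ + singularValues Y ⟨1, by omega⟩)
    ∧ frobNorm X * (singularValues Y ⟨0, by omega⟩ + singularValues Y ⟨1, by omega⟩)
        ≤ (2 : ℝ) ^ (1 - 1 / p) * frobNorm X * schattenNorm p Y := by
  classical
  obtain ⟨U, μ, hU, hY2⟩ := normal_diag d Y hY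
  have hcp : (∏ i, (Polynomial.X - C (μ i))) = ∏ i, (Polynomial.X - C (lam i)) := by
    rw [← hlam]
    rw [show Y.charpoly = (U * Matrix.diagonal μ * star U).charpoly from by rw [← hY2]]
    rw [charpoly_conj' U _ hU, charpoly_diag']
  have hml : Multiset.map μ Finset.univ.val = Multiset.map lam Finset.univ.val :=
    multiset_of_prod_eq μ lam hcp
  have hsv := sv_multiset Y U μ hU hY2
  have hs_eq : singularValues Y = sortedDesc
      (fun i => Real.sqrt ((Matrix.isHermitian_conjTranspose_mul_self Y).eigenvalues i)) := rfl
  have hanti : Antitone (singularValues Y) := by rw [hs_eq]; exact sortedDesc_antitone _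
  have hsnonneg : ∀ k, 0 ≤ singularValues Y k := by
    intro k
    rw [hs_eq]
    unfold sortedDesc
    exact Real.sqrt_nonneg _
  have hms : Multiset.map (singularValues Y) Finset.univ.val
      = Multiset.map (fun i => ‖lam i‖) Finset.univ.val := by
    rw [hs_eq, sortedDesc_multiset, hsv]
    have h := congrArg (Multiset.map (fun z : ℂ => ‖z‖)) hml
    rw [Multiset.map_map, Multiset.map_map] at h
    exact h
  have hfnn : 0 ≤ frobNorm X := Real.sqrt_nonneg _
  have h01 : (⟨0, by omega⟩ : Fin d) ≤ (⟨1, by omega⟩ : Fin d) := by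
    simp [Fin.mk_le_mk]
  have h21 : singularValues Y ⟨1, by omega⟩ ≤ singularValues Y ⟨0, by omega⟩ := hanti h01
  refine ⟨?_, ?_, ?_⟩
  · rw [show X * Y - Y * X = X * (U * Matrix.diagonal μ * star U)
        - (U * Matrix.diagonal μ * star U) * X from by rw [← hY2]]
    exact part1 d hd X U μ lam hU hml
  · obtain ⟨a, ha, hk⟩ := top_two hd (singularValues Y) (fun i => ‖lam i‖) hanti hms
    have hg := geom hd lam (singularValues Y ⟨0, by omega⟩) (singularValues Y ⟨1, by omega⟩)
      (hsnonneg _) h21 a ha hk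
    calc 2 * frobNorm X * (⨅ y : ℂ, ⨆ i, ‖lam i - y‖)
        = frobNorm X * (2 * (⨅ y : ℂ, ⨆ i, ‖lam i - y‖)) := by ring
    _ ≤ frobNorm X * (singularValues Y ⟨0, by omega⟩ + singularValues Y ⟨1, by omega⟩) :=
        mul_le_mul_of_nonneg_left hg hfnn
  · have hpm := pm hd (singularValues Y) hsnonneg p hp
    calc frobNorm X * (singularValues Y ⟨0, by omega⟩ + singularValues Y ⟨1, by omega⟩)
        ≤ frobNorm X * ((2:ℝ) ^ (1 - 1/p) * (∑ i, singularValues Y i ^ p) ^ (1/p)) :=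
        mul_le_mul_of_nonneg_left hpm hfnn
    _ = (2 : ℝ) ^ (1 - 1 / p) * frobNorm X * schattenNorm p Y := by
        simp only [schattenNorm]
        ring
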